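/- Leconte's range consistency characterization: the constraint alldifferent(x_1,...,x_n) with nonempty integer domains is range consistent if and only if for every Hall set K ⊆ {1,...,n} (a set of variables with |K| = |I_K|, where I_K = [min ⋃_{i∈K} D_i, max ⋃_{i∈K} D_i]), every variable x_i with i ∉ K satisfies D_i ∩ I_K = ∅. -/

import Mathlib

/-- Range consistency of `alldifferent` on integer domains. -/
def RangeConsistent {n : ℕ} (D : Fin n → Finset ℤ) (hne : ∀ i, (D i).Nonempty) : Prop :=
  ∀ i : Fin n, ∀ v ∈ D i, ∃ d : Fin n → ℤ, d i = v ∧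
    (∀ j, d j ∈ Finset.Icc ((D j).min' (hne j)) ((D j).max' (hne j))) ∧
    Function.Injective d

/-- The interval `I_K = [min ⋃_{i∈K} D i, max ⋃_{i∈K} D i]` of a nonempty set
of variables `K`. -/
noncomputable def IntervalOf {n : ℕ} (D : Fin n → Finset ℤ) (hne : ∀ i, (D i).Nonempty)
    (K : Finset (Fin n)) (hK : K.Nonempty) : Finset ℤ :=
  have h : (K.biUnion D).Nonempty :=
    hK.elim fun i hi => (hne i).elim fun v hv =>
      ⟨v, Finset.mem_biUnion.mpr ⟨i, hi, hv⟩⟩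
  Finset.Icc ((K.biUnion D).min' h) ((K.biUnion D).max' h)

namespace LeconteAux

variable {n : ℕ} (D : Fin n → Finset ℤ) (hne : ∀ i, (D i).Nonempty)

/-- The relaxed interval domain. -/
noncomputable def DI (j : Fin n) : Finset ℤ := Finset.Icc ((D j).min' (hne j)) ((D j).max' (hne j))

lemma subset_DI (j : Fin n) : D j ⊆ DI D hne j := fun _ hx =>
  Finset.mem_Icc.mpr ⟨Finset.min'_le _ _ hx, Finset.le_max' _ _ hx⟩

lemma DI_nonempty (j : Fin n) : (DI D hne j).Nonempty :=
  ⟨(D j).min' (hne j), subset_DI D hne j (Finset.min'_mem _ _)⟩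

lemma biUnion_nonempty {K : Finset (Fin n)} (hne : ∀ i, (D i).Nonempty) (hK : K.Nonempty) :
    (K.biUnion D).Nonempty :=
  hK.elim fun i hi => (hne i).elim fun v hv => ⟨v, Finset.mem_biUnion.mpr ⟨i, hi, hv⟩⟩

lemma mem_intervalOf {K : Finset (Fin n)} (hK : K.Nonempty) {x : ℤ}
    (hx : x ∈ K.biUnion D) : x ∈ IntervalOf D hne K hK :=
  Finset.mem_Icc.mpr ⟨Finset.min'_le _ _ hx, Finset.le_max' _ _ hx⟩

lemma subset_intervalOf {K : Finset (Fin n)} (hK : K.Nonempty) {j : Fin n} (hj : j ∈ K) :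
    D j ⊆ IntervalOf D hne K hK := fun x hx =>
  mem_intervalOf D hne hK (Finset.mem_biUnion.mpr ⟨j, hj, hx⟩)

lemma DI_subset_intervalOf {K : Finset (Fin n)} (hK : K.Nonempty) {j : Fin n} (hj : j ∈ K) :
    DI D hne j ⊆ IntervalOf D hne K hK := by
  intro x hx
  rw [DI, Finset.mem_Icc] at hx
  have h1 : (D j).min' (hne j) ∈ K.biUnion D :=
    Finset.mem_biUnion.mpr ⟨j, hj, Finset.min'_mem _ _⟩
  have h2 : (D j).max' (hne j) ∈ K.biUnion D :=
    Finset.mem_biUnion.mpr ⟨j, hj, Finset.max'_mem _ _⟩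
  exact Finset.mem_Icc.mpr ⟨le_trans (Finset.min'_le _ _ h1) hx.1,
    le_trans hx.2 (Finset.le_max' _ _ h2)⟩

lemma intervalOf_mono {K K' : Finset (Fin n)} (hK : K.Nonempty) (hK' : K'.Nonempty)
    (h : K ⊆ K') : IntervalOf D hne K hK ⊆ IntervalOf D hne K' hK' := by
  have hb : K.biUnion D ⊆ K'.biUnion D := Finset.biUnion_subset_biUnion_of_subset_left D h
  apply Finset.Icc_subset_Icc
  · exact Finset.min'_le _ _ (hb (Finset.min'_mem _ _))
  · exact Finset.le_max' _ _ (hb (Finset.max'_mem _ _))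

/-- If `u = S.biUnion (DI D hne)` happens to be an interval, it equals `IntervalOf D hne S`. -/
lemma biUnion_DI_interval_eq {S : Finset (Fin n)} (hS : S.Nonempty)
    (hu : (S.biUnion (DI D hne)).Nonempty)
    (h : S.biUnion (DI D hne) =
      Finset.Icc ((S.biUnion (DI D hne)).min' hu) ((S.biUnion (DI D hne)).max' hu)) :
    S.biUnion (DI D hne) = IntervalOf D hne S hS := by
  have hDb := biUnion_nonempty D hne hS
  have hmin : (S.biUnion (DI D hne)).min' hu = (S.biUnion D).min' hDb := by
    apply le_antisymm
    · exact Finset.min'_le _ _ (Finset.biUnion_mono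
        (fun j _ => subset_DI D hne j) (Finset.min'_mem _ _))
    · obtain ⟨j, hj, hxj⟩ := Finset.mem_biUnion.mp (Finset.min'_mem _ hu)
      rw [DI, Finset.mem_Icc] at hxj
      exact le_trans (Finset.min'_le _ _ (Finset.mem_biUnion.mpr ⟨j, hj, Finset.min'_mem _ _⟩))
        hxj.1
  have hmax : (S.biUnion (DI D hne)).max' hu = (S.biUnion D).max' hDb := by
    apply le_antisymm
    · obtain ⟨j, hj, hxj⟩ := Finset.mem_biUnion.mp (Finset.max'_mem _ hu)
      rw [DI, Finset.mem_Icc] at hxj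
      exact le_trans hxj.2
        (Finset.le_max' _ _ (Finset.mem_biUnion.mpr ⟨j, hj, Finset.max'_mem _ _⟩))
    · exact Finset.le_max' _ _ (Finset.biUnion_mono
        (fun j _ => subset_DI D hne j) (Finset.max'_mem _ _))
  rw [h, hmin, hmax]; rfl

/-- A minimal Hall violator of an interval-valued system has an interval union. -/
lemma min_violator_interval (E : Fin n → Finset ℤ)
    (hE : ∀ j, ∃ c d : ℤ, c ≤ d ∧ E j = Finset.Icc c d)
    (S : Finset (Fin n)) (hu : (S.biUnion E).Nonempty)
    (hviol : (S.biUnion E).card < S.card)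
    (hmin : ∀ T : Finset (Fin n), (T.biUnion E).card < T.card → S.card ≤ T.card) :
    S.biUnion E = Finset.Icc ((S.biUnion E).min' hu) ((S.biUnion E).max' hu) := by
  set u := S.biUnion E with hudef
  apply Finset.Subset.antisymm
  · intro x hx; exact Finset.mem_Icc.mpr ⟨Finset.min'_le _ _ hx, Finset.le_max' _ _ hx⟩
  intro g hg
  by_contra hgu
  rw [Finset.mem_Icc] at hg
  -- split S at the gap g
  classical
  set S1 := S.filter (fun j => ∀ x ∈ E j, x < g) with hS1def
  set S2 := S.filter (fun j => ∀ x ∈ E j, g < x) with hS2def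
  have hsplit : ∀ j ∈ S, (∀ x ∈ E j, x < g) ∨ (∀ x ∈ E j, g < x) := by
    intro j hj
    obtain ⟨c, d, hcd, hEj⟩ := hE j
    have hgE : g ∉ E j := fun h => hgu (Finset.mem_biUnion.mpr ⟨j, hj, h⟩)
    rw [hEj, Finset.mem_Icc] at hgE
    push_neg at hgE
    by_cases hcg : c ≤ g
    · left; intro x hx; rw [hEj, Finset.mem_Icc] at hx
      exact lt_of_le_of_lt hx.2 (hgE hcg)
    · right; intro x hx; rw [hEj, Finset.mem_Icc] at hx
      exact lt_of_lt_of_le (lt_of_not_ge hcg) hx.1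
  have hScover : S = S1 ∪ S2 := by
    apply Finset.Subset.antisymm
    · intro j hj
      rcases hsplit j hj with h | h
      · exact Finset.mem_union_left _ (Finset.mem_filter.mpr ⟨hj, h⟩)
      · exact Finset.mem_union_right _ (Finset.mem_filter.mpr ⟨hj, h⟩)
    · intro j hj
      rcases Finset.mem_union.mp hj with h | h
      · exact (Finset.mem_filter.mp h).1
      · exact (Finset.mem_filter.mp h).1
  have hSdisj : Disjoint S1 S2 := by
    rw [Finset.disjoint_left]
    intro j h1 h2
    obtain ⟨c, d, hcd, hEj⟩ := hE j
    have hc : c ∈ E j := by rw [hEj]; exact Finset.mem_Icc.mpr ⟨le_refl c, hcd⟩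
    exact absurd ((Finset.mem_filter.mp h1).2 c hc)
      (not_lt.mpr (le_of_lt ((Finset.mem_filter.mp h2).2 c hc)))
  have hUdisj : Disjoint (S1.biUnion E) (S2.biUnion E) := by
    rw [Finset.disjoint_left]
    intro x hx1 hx2
    obtain ⟨j1, hj1, hxj1⟩ := Finset.mem_biUnion.mp hx1
    obtain ⟨j2, hj2, hxj2⟩ := Finset.mem_biUnion.mp hx2
    exact absurd ((Finset.mem_filter.mp hj1).2 x hxj1)
      (not_lt.mpr (le_of_lt ((Finset.mem_filter.mp hj2).2 x hxj2)))
  -- S1 nonempty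
  have hS1ne : S1.Nonempty := by
    have hm : u.min' hu ∈ u := Finset.min'_mem _ _
    obtain ⟨j, hj, hxj⟩ := Finset.mem_biUnion.mp hm
    have hlt : u.min' hu < g := lt_of_le_of_ne hg.1 (fun h => hgu (h ▸ hm))
    rcases hsplit j hj with h | h
    · exact ⟨j, Finset.mem_filter.mpr ⟨hj, h⟩⟩
    · exact absurd (h _ hxj) (not_lt.mpr (le_of_lt hlt))
  have hS2ne : S2.Nonempty := by
    have hm : u.max' hu ∈ u := Finset.max'_mem _ _
    obtain ⟨j, hj, hxj⟩ := Finset.mem_biUnion.mp hm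
    have hlt : g < u.max' hu := lt_of_le_of_ne hg.2 (fun h => hgu (h ▸ hm))
    rcases hsplit j hj with h | h
    · exact absurd (h _ hxj) (not_lt.mpr (le_of_lt hlt))
    · exact ⟨j, Finset.mem_filter.mpr ⟨hj, h⟩⟩
  -- cards
  have hcard1 : S1.card < S.card := by
    rw [hScover, Finset.card_union_of_disjoint hSdisj]
    have := Finset.card_pos.mpr hS2ne
    omega
  have hcard2 : S2.card < S.card := by
    rw [hScover, Finset.card_union_of_disjoint hSdisj]
    have := Finset.card_pos.mpr hS1ne
    omega
  have hH1 : S1.card ≤ (S1.biUnion E).card := by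
    by_contra h; exact absurd (hmin S1 (lt_of_not_ge h)) (not_le.mpr hcard1)
  have hH2 : S2.card ≤ (S2.biUnion E).card := by
    by_contra h; exact absurd (hmin S2 (lt_of_not_ge h)) (not_le.mpr hcard2)
  have hucard : u.card = (S1.biUnion E).card + (S2.biUnion E).card := by
    have hbu : (S1 ∪ S2).biUnion E = S1.biUnion E ∪ S2.biUnion E := by
      ext x; simp only [Finset.mem_biUnion, Finset.mem_union]
      constructor
      · rintro ⟨a, ha | ha, hx⟩
        · exact Or.inl ⟨a, ha, hx⟩
        · exact Or.inr ⟨a, ha, hx⟩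
      · rintro (⟨a, ha, hx⟩ | ⟨a, ha, hx⟩)
        · exact ⟨a, Or.inl ha, hx⟩
        · exact ⟨a, Or.inr ha, hx⟩
    rw [hudef, hScover, hbu, Finset.card_union_of_disjoint hUdisj]
  have hscard : S.card = S1.card + S2.card := by
    rw [hScover, Finset.card_union_of_disjoint hSdisj]
  omega

lemma min'_congr {s t : Finset ℤ} (h : s = t) (hs : s.Nonempty) (ht : t.Nonempty) :
    s.min' hs = t.min' ht := by subst h; rfl

lemma max'_congr {s t : Finset ℤ} (h : s = t) (hs : s.Nonempty) (ht : t.Nonempty) :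
    s.max' hs = t.max' ht := by subst h; rfl

lemma intervalOf_nonempty {K : Finset (Fin n)} (hK : K.Nonempty) :
    (IntervalOf D hne K hK).Nonempty :=
  ⟨(K.biUnion D).min' (biUnion_nonempty D hne hK),
    mem_intervalOf D hne hK (Finset.min'_mem _ _)⟩

/-- Under the Hall-set hypothesis, every nonempty set satisfies `|K| ≤ |I_K|`. -/
lemma card_le_interval
    (H : ∀ (K : Finset (Fin n)) (hK : K.Nonempty),
        K.card = (IntervalOf D hne K hK).card →
        ∀ i : Fin n, i ∉ K → D i ∩ IntervalOf D hne K hK = ∅) :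
    ∀ (T : Finset (Fin n)) (hT : T.Nonempty), T.card ≤ (IntervalOf D hne T hT).card := by
  classical
  intro T
  induction T using Finset.strongInductionOn with
  | _ T ih =>
    intro hT
    by_contra hlt
    push_neg at hlt
    have hIpos : 1 ≤ (IntervalOf D hne T hT).card :=
      Finset.card_pos.mpr (intervalOf_nonempty D hne hT)
    have hT2 : 2 ≤ T.card := by omega
    obtain ⟨j, hj⟩ := id hT
    set T' := T.erase j with hT'def
    have hT'card : T'.card = T.card - 1 := Finset.card_erase_of_mem hj
    have hT'ne : T'.Nonempty := Finset.card_pos.mp (by omega)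
    have hsub : T' ⊆ T := Finset.erase_subset _ _
    have hss : T' ⊂ T := Finset.erase_ssubset hj
    have hIH : T'.card ≤ (IntervalOf D hne T' hT'ne).card := ih T' hss hT'ne
    have hImono : IntervalOf D hne T' hT'ne ⊆ IntervalOf D hne T ⟨j, hj⟩ :=
      intervalOf_mono D hne hT'ne ⟨j, hj⟩ hsub
    have hIcards : (IntervalOf D hne T' hT'ne).card ≤ (IntervalOf D hne T ⟨j, hj⟩).card :=
      Finset.card_le_card hImono
    have hIT : (IntervalOf D hne T ⟨j, hj⟩).card = (IntervalOf D hne T hT).card := rfl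
    have hIeq : IntervalOf D hne T' hT'ne = IntervalOf D hne T ⟨j, hj⟩ :=
      Finset.eq_of_subset_of_card_le hImono (by omega)
    have hHall : T'.card = (IntervalOf D hne T' hT'ne).card := by omega
    have hdisj := H T' hT'ne hHall j (Finset.notMem_erase j T)
    have hDj : D j ⊆ IntervalOf D hne T' hT'ne := by
      rw [hIeq]; exact subset_intervalOf D hne ⟨j, hj⟩ hj
    obtain ⟨x, hx⟩ := hne j
    have : x ∈ D j ∩ IntervalOf D hne T' hT'ne := Finset.mem_inter.mpr ⟨hx, hDj hx⟩
    rw [hdisj] at this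
    exact absurd this (Finset.notMem_empty x)

end LeconteAux

theorem leconte_range_consistency {n : ℕ} (D : Fin n → Finset ℤ)
    (hne : ∀ i, (D i).Nonempty) :
    RangeConsistent D hne ↔
      (∀ (K : Finset (Fin n)) (hK : K.Nonempty),
        K.card = (IntervalOf D hne K hK).card →
        ∀ i : Fin n, i ∉ K → D i ∩ IntervalOf D hne K hK = ∅) := by
  open LeconteAux in
  constructor
  · -- forward
    intro RC K hK hcard i hi
    by_contra hne'
    obtain ⟨v, hv⟩ := Finset.nonempty_iff_ne_empty.mpr hne'
    rw [Finset.mem_inter] at hv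
    obtain ⟨d, hdi, hdmem, hdinj⟩ := RC i v hv.1
    have hsub : ∀ j ∈ insert i K, d j ∈ IntervalOf D hne K hK := by
      intro j hj
      rcases Finset.mem_insert.mp hj with rfl | hjK
      · rw [hdi]; exact hv.2
      · exact DI_subset_intervalOf D hne hK hjK (hdmem j)
    have hcardle : (insert i K).card ≤ (IntervalOf D hne K hK).card :=
      Finset.card_le_card_of_injOn d hsub (fun a _ b _ h => hdinj h)
    rw [Finset.card_insert_of_notMem hi] at hcardle
    omega
  · -- backward
    intro H i v hv
    classical
    set E : Fin n → Finset ℤ := fun j => if j = i then ({v} : Finset ℤ) else DI D hne j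
      with hEdef
    have hEne : ∀ j, (E j).Nonempty := by
      intro j; rw [hEdef]; dsimp only
      split
      · exact ⟨v, Finset.mem_singleton_self v⟩
      · exact DI_nonempty D hne j
    have hEint : ∀ j, ∃ c d : ℤ, c ≤ d ∧ E j = Finset.Icc c d := by
      intro j; rw [hEdef]; dsimp only
      split
      · exact ⟨v, v, le_refl v, (Finset.Icc_self v).symm⟩
      · exact ⟨(D j).min' (hne j), (D j).max' (hne j),
          Finset.le_max' _ _ (Finset.min'_mem _ _), rfl⟩
    have hhall : ∀ S : Finset (Fin n), S.card ≤ (S.biUnion E).card := by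
      by_contra hcon
      push_neg at hcon
      obtain ⟨S0, hS0⟩ := hcon
      have hVne : (Finset.univ.powerset.filter
          (fun T : Finset (Fin n) => (T.biUnion E).card < T.card)).Nonempty :=
        ⟨S0, Finset.mem_filter.mpr ⟨Finset.mem_powerset.mpr (Finset.subset_univ S0), hS0⟩⟩
      obtain ⟨S, hSmem, hSmin⟩ := Finset.exists_min_image _ Finset.card hVne
      have hviol : (S.biUnion E).card < S.card := (Finset.mem_filter.mp hSmem).2
      have hmin : ∀ T : Finset (Fin n), (T.biUnion E).card < T.card → S.card ≤ T.card :=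
        fun T hT => hSmin T
          (Finset.mem_filter.mpr ⟨Finset.mem_powerset.mpr (Finset.subset_univ T), hT⟩)
      have hSne : S.Nonempty := Finset.card_pos.mp (by omega)
      have huNE : (S.biUnion E).Nonempty :=
        hSne.biUnion (fun j _ => hEne j)
      have hIcc := min_violator_interval E hEint S huNE hviol hmin
      by_cases hiS : i ∈ S
      · -- remove i
        set S' := S.erase i with hS'def
        have hS'card : S'.card = S.card - 1 := Finset.card_erase_of_mem hiS
        have hS'ne : S'.Nonempty := by
          rw [← Finset.card_pos, hS'card]
          by_contra hz
          have hS1 : S.card = 1 := by omega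
          obtain ⟨a, ha⟩ := Finset.card_eq_one.mp hS1
          have hai : a = i := by
            have := hiS; rw [ha, Finset.mem_singleton] at this; exact this.symm
          rw [ha, hai] at hviol
          rw [Finset.singleton_biUnion] at hviol
          have : E i = {v} := by rw [hEdef]; simp
          rw [this] at hviol
          simp at hviol
        have hEsame : ∀ j ∈ S', E j = DI D hne j := by
          intro j hj
          have : j ≠ i := Finset.ne_of_mem_erase hj
          rw [hEdef]; simp [this]
        have hwu : S'.biUnion (DI D hne) = S'.biUnion E :=
          Finset.biUnion_congr rfl (fun j hj => (hEsame j hj).symm)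
        have hsub : S'.biUnion E ⊆ S.biUnion E :=
          Finset.biUnion_subset_biUnion_of_subset_left E (Finset.erase_subset _ _)
        have hminS' : S'.card ≤ (S'.biUnion E).card := by
          by_contra hc
          have := hmin S' (lt_of_not_ge hc)
          omega
        have hcards : (S.biUnion E).card ≤ (S'.biUnion E).card := by
          have h1 : (S'.biUnion E).card ≤ (S.biUnion E).card := Finset.card_le_card hsub
          omega
        have hEq : S'.biUnion E = S.biUnion E :=
          Finset.eq_of_subset_of_card_le hsub hcards
        have hEqw : S'.biUnion (DI D hne) = S.biUnion E := hwu.trans hEq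
        have hwNE : (S'.biUnion (DI D hne)).Nonempty := by rw [hEqw]; exact huNE
        have hwIcc : S'.biUnion (DI D hne) =
            Finset.Icc ((S'.biUnion (DI D hne)).min' hwNE)
              ((S'.biUnion (DI D hne)).max' hwNE) := by
          rw [min'_congr hEqw hwNE huNE, max'_congr hEqw hwNE huNE, hEqw]
          exact hIcc
        have hwI : S'.biUnion (DI D hne) = IntervalOf D hne S' hS'ne :=
          biUnion_DI_interval_eq D hne hS'ne hwNE hwIcc
        have hIcard : S'.card = (IntervalOf D hne S' hS'ne).card := by
          have h1 : (IntervalOf D hne S' hS'ne).card = (S.biUnion E).card := by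
            rw [← hwI, hEqw]
          have h2 : (S'.biUnion E).card = (S.biUnion E).card := by rw [hEq]
          omega
        have hdisj := H S' hS'ne hIcard i (Finset.notMem_erase i S)
        have hvu : v ∈ S.biUnion E := by
          apply Finset.mem_biUnion.mpr ⟨i, hiS, ?_⟩
          rw [hEdef]; simp
        have hvI : v ∈ IntervalOf D hne S' hS'ne := by
          rw [← hwI, hEqw]; exact hvu
        have : v ∈ D i ∩ IntervalOf D hne S' hS'ne := Finset.mem_inter.mpr ⟨hv, hvI⟩
        rw [hdisj] at this
        exact absurd this (Finset.notMem_empty v)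
      · -- i ∉ S
        have hEsame : ∀ j ∈ S, E j = DI D hne j := by
          intro j hj
          have : j ≠ i := fun h => hiS (h ▸ hj)
          rw [hEdef]; simp [this]
        have hwu : S.biUnion (DI D hne) = S.biUnion E :=
          Finset.biUnion_congr rfl (fun j hj => (hEsame j hj).symm)
        have hwNE : (S.biUnion (DI D hne)).Nonempty := by rw [hwu]; exact huNE
        have hwIcc : S.biUnion (DI D hne) =
            Finset.Icc ((S.biUnion (DI D hne)).min' hwNE)
              ((S.biUnion (DI D hne)).max' hwNE) := by
          rw [min'_congr hwu hwNE huNE, max'_congr hwu hwNE huNE, hwu]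
          exact hIcc
        have hwI : S.biUnion (DI D hne) = IntervalOf D hne S hSne :=
          biUnion_DI_interval_eq D hne hSne hwNE hwIcc
        have hA := card_le_interval D hne H S hSne
        rw [← hwI, hwu] at hA
        omega
    obtain ⟨f, hfinj, hfmem⟩ :=
      (Finset.all_card_le_biUnion_card_iff_exists_injective E).mp hhall
    refine ⟨f, ?_, ?_, hfinj⟩
    · have := hfmem i
      rw [hEdef] at this; simp at this; exact this
    · intro j
      by_cases hji : j = i
      · subst hji
        have := hfmem j
        rw [hEdef] at this; simp at this
        rw [this]
        exact subset_DI D hne j hv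
      · have := hfmem j
        rw [hEdef] at this; simp [hji] at this
        exact this
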